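/- arXiv:1804.10920 — 10 statements merged into one kernel-verified Lean document; each statement's English description precedes it below -/
import Mathlib

section
/- Let G be a finite simple graph and S ⊆ V(G) such that G ⊕ S is triangle-free. Let u, v ∈ S be distinct vertices with uv ∉ E(G). Then S is contained in the union of the closed neighborhoods of u and v in G, that is, S ⊆ N_G[u] ∪ N_G[v]. -/
/-- The partial complement `G ⊕ S` of a simple graph `G` with respect to a vertex set `S`:
distinct vertices `u, v` are adjacent iff either they are adjacent in `G` and not both
belong to `S`, or they are nonadjacent in `G` and both belong to `S`. -/
def SimpleGraph.partialComplement {V : Type*} (G : SimpleGraph V) (S : Set V) :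
    SimpleGraph V where
  Adj u v := u ≠ v ∧ ((G.Adj u v ∧ ¬(u ∈ S ∧ v ∈ S)) ∨ (¬ G.Adj u v ∧ u ∈ S ∧ v ∈ S))
  symm := by
    constructor
    intro u v h
    obtain ⟨hne, h⟩ := h
    refine ⟨hne.symm, ?_⟩
    rcases h with ⟨ha, hs⟩ | ⟨ha, hu, hv⟩
    · exact Or.inl ⟨ha.symm, fun hc => hs ⟨hc.2, hc.1⟩⟩
    · exact Or.inr ⟨fun hvu => ha hvu.symm, hv, hu⟩
  loopless := ⟨fun v h => h.1 rfl⟩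

/-- If `G ⊕ S` is triangle-free and `u, v ∈ S` are distinct nonadjacent vertices of `G`,
then `S` is contained in the union of the closed neighborhoods of `u` and `v` in `G`. -/
theorem solution_subset_union_closed_neighborhoods {V : Type*} [Fintype V]
    (G : SimpleGraph V) (S : Set V)
    (h : (G.partialComplement S).CliqueFree 3)
    (u v : V) (hu : u ∈ S) (hv : v ∈ S) (huv : u ≠ v) (hadj : ¬ G.Adj u v) :
    S ⊆ insert u (G.neighborSet u) ∪ insert v (G.neighborSet v) := by
  intro w hw
  classical
  by_contra hc
  simp only [Set.mem_union, Set.mem_insert_iff, SimpleGraph.mem_neighborSet, not_or] at hc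
  obtain ⟨⟨hwu, hau⟩, hwv, hav⟩ := hc
  apply h {u, v, w}
  refine ⟨?_, by
    rw [Finset.card_insert_of_notMem, Finset.card_insert_of_notMem] <;> simp_all [eq_comm]⟩
  intro a ha b hb hab
  have key : ∀ x y : V, x ∈ S → y ∈ S → x ≠ y → ¬ G.Adj x y →
      (G.partialComplement S).Adj x y := fun x y hx hy hne hna =>
    ⟨hne, Or.inr ⟨hna, hx, hy⟩⟩
  simp only [Finset.coe_insert, Set.mem_insert_iff, Finset.coe_singleton,
    Set.mem_singleton_iff] at ha hb
  have hawu : ¬ G.Adj w u := fun h' => hau h'.symm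
  have hawv : ¬ G.Adj w v := fun h' => hav h'.symm
  rcases ha with rfl|rfl|rfl <;> rcases hb with rfl|rfl|rfl <;>
    first
    | exact absurd rfl hab
    | exact key _ _ hu hv hab hadj
    | exact key _ _ hv hu hab (fun h' => hadj h'.symm)
    | exact key _ _ hu hw hab hau
    | exact key _ _ hw hu hab hawu
    | exact key _ _ hv hw hab hav
    | exact key _ _ hw hv hab hawv
end

section
/- Let G be a finite simple graph and S ⊆ V(G) such that G ⊕ S is triangle-free. Let u, v ∈ S be distinct vertices with uv ∉ E(G). Then every common neighbor of u and v in G belongs to S, that is, N_G(u) ∩ N_G(v) ⊆ S. -/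
/-- If `G ⊕ S` is triangle-free and `u, v ∈ S` are distinct nonadjacent vertices of `G`,
then every common neighbor of `u` and `v` in `G` belongs to `S`. -/
theorem common_neighbors_subset_solution {V : Type*} [Fintype V]
    (G : SimpleGraph V) (S : Set V)
    (h : (G.partialComplement S).CliqueFree 3)
    (u v : V) (hu : u ∈ S) (hv : v ∈ S) (huv : u ≠ v) (hadj : ¬ G.Adj u v) :
    G.neighborSet u ∩ G.neighborSet v ⊆ S := by
  intro w hw
  by_contra hwS
  classical
  obtain ⟨hwu', hwv'⟩ := hw
  have hwu : G.Adj w u := hwu'.symm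
  have hwv : G.Adj w v := hwv'.symm
  have hne1 : u ≠ w := hwu'.ne
  have hne2 : v ≠ w := hwv'.ne
  exact h {u, v, w} ⟨by
    intro a ha b hb hab
    simp only [Finset.coe_insert, Set.mem_insert_iff, Finset.coe_singleton,
      Set.mem_singleton_iff] at ha hb
    rcases ha with rfl|rfl|rfl <;> rcases hb with rfl|rfl|rfl <;>
      show _ ≠ _ ∧ _ <;>
      first
      | exact absurd rfl hab
      | exact ⟨hab, Or.inr ⟨hadj, hu, hv⟩⟩
      | exact ⟨hab, Or.inr ⟨fun hh => hadj hh.symm, hv, hu⟩⟩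
      | exact ⟨hab, Or.inl ⟨hwu', fun hc => hwS hc.2⟩⟩
      | exact ⟨hab, Or.inl ⟨hwu, fun hc => hwS hc.1⟩⟩
      | exact ⟨hab, Or.inl ⟨hwv', fun hc => hwS hc.2⟩⟩
      | exact ⟨hab, Or.inl ⟨hwv, fun hc => hwS hc.1⟩⟩,
    by rw [Finset.card_insert_of_notMem (by simp [huv, hne1]),
          Finset.card_insert_of_notMem (by simp [hne2]), Finset.card_singleton]⟩
end

section
/- Let G be a finite simple graph and S ⊆ V(G) such that G ⊕ S is triangle-free. Let u, v ∈ S be distinct vertices with uv ∉ E(G). Then the set (N_G(u) \ N_G(v)) ∩ S is a clique in G, and the set (N_G(u) \ N_G(v)) \ S is an independent set in G; in particular, the subgraph of G induced by N_G(u) \ N_G(v) is a split graph. -/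
/-- An independent set in a simple graph: a set of pairwise nonadjacent vertices. -/
def SimpleGraph.IsIndepSet' {V : Type*} (G : SimpleGraph V) (A : Set V) : Prop :=
  ∀ ⦃x⦄, x ∈ A → ∀ ⦃y⦄, y ∈ A → x ≠ y → ¬ G.Adj x y

/-- If `G ⊕ S` is triangle-free and `u, v ∈ S` are distinct nonadjacent vertices of `G`,
then `(N_G(u) \ N_G(v)) ∩ S` is a clique in `G` and `(N_G(u) \ N_G(v)) \ S` is an
independent set in `G`; in particular the subgraph of `G` induced by `N_G(u) \ N_G(v)`
is a split graph, i.e., `N_G(u) \ N_G(v)` is partitioned into a clique and an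
independent set of `G`. -/
theorem nonclique_solution_split_structure {V : Type*} [Fintype V]
    (G : SimpleGraph V) (S : Set V)
    (h : (G.partialComplement S).CliqueFree 3)
    (u v : V) (hu : u ∈ S) (hv : v ∈ S) (huv : u ≠ v) (hadj : ¬ G.Adj u v) :
    G.IsClique ((G.neighborSet u \ G.neighborSet v) ∩ S) ∧
    G.IsIndepSet' ((G.neighborSet u \ G.neighborSet v) \ S) ∧
    ∃ C I : Set V,
      C ∪ I = G.neighborSet u \ G.neighborSet v ∧ Disjoint C I ∧
      G.IsClique C ∧ G.IsIndepSet' I := by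
  have key : ∀ a b c : V, (G.partialComplement S).Adj a b →
      (G.partialComplement S).Adj a c → (G.partialComplement S).Adj b c → False := by
    classical
    intro a b c hab hac hbc
    exact h {a, b, c} (SimpleGraph.is3Clique_triple_iff.mpr ⟨hab, hac, hbc⟩)
  have hcl : G.IsClique ((G.neighborSet u \ G.neighborSet v) ∩ S) := by
    intro x hx y hy hxy
    by_contra hnxy
    obtain ⟨⟨hxu, hxv⟩, hxS⟩ := hx
    obtain ⟨⟨hyu, hyv⟩, hyS⟩ := hy
    have hvx : v ≠ x := fun e => hadj (by rw [e]; exact hxu)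
    have hvy : v ≠ y := fun e => hadj (by rw [e]; exact hyu)
    exact key v x y ⟨hvx, Or.inr ⟨hxv, hv, hxS⟩⟩ ⟨hvy, Or.inr ⟨hyv, hv, hyS⟩⟩
      ⟨hxy, Or.inr ⟨hnxy, hxS, hyS⟩⟩
  have hind : G.IsIndepSet' ((G.neighborSet u \ G.neighborSet v) \ S) := by
    intro x hx y hy hxy hAdj
    obtain ⟨⟨hxu, _⟩, hxS⟩ := hx
    obtain ⟨⟨hyu, _⟩, hyS⟩ := hy
    exact key u x y ⟨hxu.ne, Or.inl ⟨hxu, fun hc => hxS hc.2⟩⟩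
      ⟨hyu.ne, Or.inl ⟨hyu, fun hc => hyS hc.2⟩⟩
      ⟨hxy, Or.inl ⟨hAdj, fun hc => hxS hc.1⟩⟩
  refine ⟨hcl, hind, _, _, Set.inter_union_diff _ _, ?_, hcl, hind⟩
  rw [Set.disjoint_left]
  exact fun a ha hb => hb.2 ha.2
end

section
/- Let G be a finite simple graph and S ⊆ V(G) such that G ⊕ S is triangle-free, and suppose u, v ∈ S are distinct vertices with uv ∉ E(G). Then S = {u, v} ∪ (N_G(u) ∩ N_G(v)) ∪ (S ∩ (N_G(u) \ N_G(v))) ∪ (S ∩ (N_G(v) \ N_G(u))). -/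
/-- If `G ⊕ S` is triangle-free and `u, v ∈ S` are distinct nonadjacent vertices of `G`,
then `S = {u, v} ∪ (N_G(u) ∩ N_G(v)) ∪ (S ∩ (N_G(u) \ N_G(v))) ∪ (S ∩ (N_G(v) \ N_G(u)))`. -/
theorem solution_decomposition {V : Type*} [Fintype V]
    (G : SimpleGraph V) (S : Set V)
    (h : (G.partialComplement S).CliqueFree 3)
    (u v : V) (hu : u ∈ S) (hv : v ∈ S) (huv : u ≠ v) (hadj : ¬ G.Adj u v) :
    S = {u, v} ∪ (G.neighborSet u ∩ G.neighborSet v) ∪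
        (S ∩ (G.neighborSet u \ G.neighborSet v)) ∪
        (S ∩ (G.neighborSet v \ G.neighborSet u)) := by
  classical
  have key : ∀ a b c : V, (G.partialComplement S).Adj a b →
      (G.partialComplement S).Adj a c → (G.partialComplement S).Adj b c → False := by
    intro a b c hab hac hbc
    exact h {a,b,c} (SimpleGraph.is3Clique_triple_iff.2 ⟨hab, hac, hbc⟩)
  ext w
  simp only [Set.mem_union, Set.mem_inter_iff, Set.mem_diff, Set.mem_insert_iff,
    Set.mem_singleton_iff, SimpleGraph.mem_neighborSet]
  constructor
  · intro hw
    by_cases hwu : w = u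
    · exact Or.inl (Or.inl (Or.inl (Or.inl hwu)))
    by_cases hwv : w = v
    · exact Or.inl (Or.inl (Or.inl (Or.inr hwv)))
    by_cases h1 : G.Adj u w <;> by_cases h2 : G.Adj v w
    · exact Or.inl (Or.inl (Or.inr ⟨h1, h2⟩))
    · exact Or.inl (Or.inr ⟨hw, h1, h2⟩)
    · exact Or.inr ⟨hw, h2, h1⟩
    · exact absurd (key u v w ⟨huv, Or.inr ⟨hadj, hu, hv⟩⟩
        ⟨Ne.symm hwu, Or.inr ⟨h1, hu, hw⟩⟩ ⟨Ne.symm hwv, Or.inr ⟨h2, hv, hw⟩⟩) id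
  · intro hw
    rcases hw with (((h1 | h1) | ⟨hwu, hwv⟩) | ⟨hws, _⟩) | ⟨hws, _⟩
    · subst h1; exact hu
    · subst h1; exact hv
    · by_contra hws
      exact key u v w ⟨huv, Or.inr ⟨hadj, hu, hv⟩⟩
        ⟨hwu.ne, Or.inl ⟨hwu, fun hc => hws hc.2⟩⟩
        ⟨hwv.ne, Or.inl ⟨hwv, fun hc => hws hc.2⟩⟩
    · exact hws
    · exact hws
end

section
/- Let k be a positive integer and let M be a symmetric k × k matrix with entries in {0, 1, ⋆}. Define the symmetric 2k × 2k matrix M' (with rows and columns indexed by 1, …, 2k) by: M'[i, j] = M[⌈i/2⌉, ⌈j/2⌉] if at least one of i, j is even, and M'[i, j] = ¬M[(i+1)/2, (j+1)/2] if both i and j are odd, where ¬0 = 1, ¬1 = 0, and ¬⋆ = ⋆. Then for every finite simple graph G, there exists a set S ⊆ V(G) such that G ⊕ S admits an M-partition if and only if G admits an M'-partition. -/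
/-- A graph `G` admits an `M`-partition for a `k × k` matrix `M` with entries in
`{0, 1, ⋆}` (encoded as `Option Bool` with `some false = 0`, `some true = 1`,
`none = ⋆`) if there is `f : V → Fin k` such that for all distinct `u, v`:
if `M[f u, f v] = 1` then `uv` is an edge, and if `M[f u, f v] = 0` then `uv` is
a non-edge. -/
def SimpleGraph.HasMPartition {V : Type*} {k : ℕ} (G : SimpleGraph V)
    (M : Fin k → Fin k → Option Bool) : Prop :=
  ∃ f : V → Fin k, ∀ u v : V, u ≠ v →
    (M (f u) (f v) = some true → G.Adj u v) ∧
    (M (f u) (f v) = some false → ¬ G.Adj u v)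

/-- Negation of a matrix entry: `¬0 = 1`, `¬1 = 0`, `¬⋆ = ⋆`. -/
def negEntry : Option Bool → Option Bool
  | some b => some (!b)
  | none => none

/-- The `2k × 2k` matrix `M'` obtained from a `k × k` matrix `M`: with rows and columns
indexed by `1, …, 2k` (here `0`-indexed by `Fin (2*k)`, so index `i : Fin (2*k)`
corresponds to the `1`-based index `i + 1`), `M'[i,j] = M[⌈i/2⌉, ⌈j/2⌉]` if at least
one of the `1`-based indices `i, j` is even, and `M'[i,j] = ¬M[(i+1)/2, (j+1)/2]` if
both are odd. -/
def doubledMatrix {k : ℕ} (M : Fin k → Fin k → Option Bool) :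
    Fin (2 * k) → Fin (2 * k) → Option Bool := fun i j =>
  if i.val % 2 = 1 ∨ j.val % 2 = 1 then
    M ⟨i.val / 2, by have := i.isLt; omega⟩ ⟨j.val / 2, by have := j.isLt; omega⟩
  else
    negEntry (M ⟨i.val / 2, by have := i.isLt; omega⟩ ⟨j.val / 2, by have := j.isLt; omega⟩)

lemma doubledMatrix_apply {k : ℕ} (M : Fin k → Fin k → Option Bool)
    (a b : Fin k) (su sv : Bool)
    (hi : 2 * a.val + (if su then 0 else 1) < 2 * k)
    (hj : 2 * b.val + (if sv then 0 else 1) < 2 * k) :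
    doubledMatrix M ⟨2 * a.val + (if su then 0 else 1), hi⟩
        ⟨2 * b.val + (if sv then 0 else 1), hj⟩ =
      if su ∧ sv then negEntry (M a b) else M a b := by
  unfold doubledMatrix
  rcases su <;> rcases sv <;>
    simp only [Bool.false_eq_true, if_true, if_false, and_self, and_true, and_false,
      true_and, false_and] <;>
    split_ifs with h <;>
    first
    | (exfalso; omega)
    | (congr 2 <;> exact Fin.ext (by simp only; omega))
    | (congr 1 <;> exact Fin.ext (by simp only; omega))
    | (exfalso; revert h; simp; omega)

/-- A graph `G` has a partial complement admitting an `M`-partition iff `G` itself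
admits an `M'`-partition, where `M'` is the doubled matrix of `M`. -/
theorem partialComplement_mPartition_iff {V : Type*} [Fintype V] {k : ℕ} (hk : 0 < k)
    (M : Fin k → Fin k → Option Bool) (hsym : ∀ i j, M i j = M j i)
    (G : SimpleGraph V) :
    (∃ S : Set V, (G.partialComplement S).HasMPartition M) ↔
      G.HasMPartition (doubledMatrix M) := by
  constructor
  · rintro ⟨S, f, hf⟩
    classical
    refine ⟨fun v => ⟨2 * (f v).val + (if v ∈ S then 0 else 1), by
      have := (f v).isLt; split <;> omega⟩, ?_⟩
    intro u v huv
    have h := hf u v huv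
    have key := doubledMatrix_apply M (f u) (f v) (decide (u ∈ S)) (decide (v ∈ S))
      (by have := (f u).isLt; split <;> omega)
      (by have := (f v).isLt; split <;> omega)
    simp only [decide_eq_true_eq] at key
    beta_reduce
    rw [key]
    by_cases hu : u ∈ S <;> by_cases hv : v ∈ S <;>
      simp only [hu, hv, and_self, and_false, false_and, if_true, if_false] <;>
      [skip; skip; skip; skip] <;>
      constructor <;> intro hM
    · -- both in S, M' = negEntry
      rcases hMB : M (f u) (f v) with _ | b <;> simp [hMB, negEntry] at hM
      subst hM
      have := (h.2 (by rw [hMB]))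
      simp [SimpleGraph.partialComplement, huv, hu, hv] at this
      tauto
    · rcases hMB : M (f u) (f v) with _ | b <;> simp [hMB, negEntry] at hM
      subst hM
      have := (h.1 (by rw [hMB]))
      simp [SimpleGraph.partialComplement, huv, hu, hv] at this
      tauto
    · have := h.1 hM
      simp [SimpleGraph.partialComplement, huv, hu, hv] at this
      tauto
    · have := h.2 hM
      simp [SimpleGraph.partialComplement, huv, hu, hv] at this
      tauto
    · have := h.1 hM
      simp [SimpleGraph.partialComplement, huv, hu, hv] at this
      tauto
    · have := h.2 hM
      simp [SimpleGraph.partialComplement, huv, hu, hv] at this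
      tauto
    · have := h.1 hM
      simp [SimpleGraph.partialComplement, huv, hu, hv] at this
      tauto
    · have := h.2 hM
      simp [SimpleGraph.partialComplement, huv, hu, hv] at this
      tauto
  · rintro ⟨g, hg⟩
    classical
    set S : Set V := {v | (g v).val % 2 = 0} with hS
    refine ⟨S, fun v => ⟨(g v).val / 2, by have := (g v).isLt; omega⟩, ?_⟩
    intro u v huv
    have h := hg u v huv
    have key := doubledMatrix_apply M ⟨(g u).val / 2, by have := (g u).isLt; omega⟩
      ⟨(g v).val / 2, by have := (g v).isLt; omega⟩
      (decide ((g u).val % 2 = 0)) (decide ((g v).val % 2 = 0))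
      (by have := (g u).isLt; simp only [decide_eq_true_eq]; split <;> omega)
      (by have := (g v).isLt; simp only [decide_eq_true_eq]; split <;> omega)
    simp only [decide_eq_true_eq] at key
    have heq : doubledMatrix M (g u) (g v) =
        if (g u).val % 2 = 0 ∧ (g v).val % 2 = 0 then
          negEntry (M ⟨(g u).val / 2, by have := (g u).isLt; omega⟩
            ⟨(g v).val / 2, by have := (g v).isLt; omega⟩)
        else M ⟨(g u).val / 2, by have := (g u).isLt; omega⟩
          ⟨(g v).val / 2, by have := (g v).isLt; omega⟩ := by
      rw [← key]
      congr 1 <;> exact Fin.ext (by simp only; split <;> omega)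
    rw [heq] at h
    have hmemu : u ∈ S ↔ (g u).val % 2 = 0 := Iff.rfl
    have hmemv : v ∈ S ↔ (g v).val % 2 = 0 := Iff.rfl
    by_cases hu : (g u).val % 2 = 0 <;> by_cases hv : (g v).val % 2 = 0
    · simp only [hu, hv, and_self, if_true] at h
      have hAdj : (G.partialComplement S).Adj u v ↔ ¬ G.Adj u v := by
        constructor
        · rintro ⟨-, ⟨ha, hns⟩ | ⟨hna, -⟩⟩
          · exact absurd ⟨hmemu.mpr hu, hmemv.mpr hv⟩ hns
          · exact hna
        · intro hna
          exact ⟨huv, Or.inr ⟨hna, hmemu.mpr hu, hmemv.mpr hv⟩⟩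
      constructor <;> intro hM
      · rcases hMB : M _ _ with _ | b <;> rw [hMB] at hM <;>
          simp [negEntry] at hM
        subst hM
        exact hAdj.mpr (h.2 (by rw [hMB]; rfl))
      · rcases hMB : M _ _ with _ | b <;> rw [hMB] at hM <;>
          simp [negEntry] at hM
        subst hM
        intro hadj
        exact (hAdj.mp hadj) (h.1 (by rw [hMB]; rfl))
    all_goals {
      simp only [hu, hv, and_false, false_and, and_true, if_false] at h
      have hnb : ¬(u ∈ S ∧ v ∈ S) := by
        rintro ⟨h1, h2⟩
        have h1' := hmemu.mp h1
        have h2' := hmemv.mp h2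
        tauto
      have hAdj : (G.partialComplement S).Adj u v ↔ G.Adj u v := by
        constructor
        · rintro ⟨-, ⟨ha, -⟩ | ⟨-, hb⟩⟩
          · exact ha
          · exact absurd hb hnb
        · intro ha
          exact ⟨huv, Or.inl ⟨ha, hnb⟩⟩
      exact ⟨fun hM => hAdj.mpr (h.1 hM), fun hM hadj => (h.2 hM) (hAdj.mp hadj)⟩ }
end

section
/- Let G be a finite simple graph. There exists a set S ⊆ V(G) such that G ⊕ S is a split graph if and only if V(G) can be partitioned into four (possibly empty) sets X₁, X₂, X₃, X₄ such that: X₁ is a clique in G, X₂ is an independent set in G, there is no edge of G between X₁ and X₂, X₃ is an independent set in G, X₄ is a clique in G, and every vertex of X₃ is adjacent in G to every vertex of X₄. -/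
/-- A split graph: the vertex set can be partitioned into a clique and an
independent set. -/
def SimpleGraph.IsSplit {V : Type*} (G : SimpleGraph V) : Prop :=
  ∃ C I : Set V, C ∪ I = Set.univ ∧ Disjoint C I ∧ G.IsClique C ∧ G.IsIndepSet' I

lemma pc_adj_of_both {V : Type*} {G : SimpleGraph V} {S : Set V} {u v : V}
    (hu : u ∈ S) (hv : v ∈ S) :
    (G.partialComplement S).Adj u v ↔ u ≠ v ∧ ¬ G.Adj u v := by
  constructor
  · rintro ⟨hne, ⟨_, hns⟩ | ⟨hna, _⟩⟩
    · exact absurd ⟨hu, hv⟩ hns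
    · exact ⟨hne, hna⟩
  · rintro ⟨hne, hna⟩
    exact ⟨hne, Or.inr ⟨hna, hu, hv⟩⟩

lemma pc_adj_of_not_both {V : Type*} {G : SimpleGraph V} {S : Set V} {u v : V}
    (h : ¬ (u ∈ S ∧ v ∈ S)) :
    (G.partialComplement S).Adj u v ↔ G.Adj u v := by
  constructor
  · rintro ⟨hne, ⟨ha, _⟩ | ⟨_, hs⟩⟩
    · exact ha
    · exact absurd hs h
  · intro ha
    exact ⟨ha.ne, Or.inl ⟨ha, h⟩⟩

/-- Some partial complement of `G` is a split graph iff `V(G)` can be partitioned into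
four (possibly empty) sets `X₁, X₂, X₃, X₄` such that `X₁` is a clique, `X₂` is an
independent set, there is no edge between `X₁` and `X₂`, `X₃` is an independent set,
`X₄` is a clique, and every vertex of `X₃` is adjacent to every vertex of `X₄`. -/
theorem partialComplement_split_iff {V : Type*} [Fintype V] (G : SimpleGraph V) :
    (∃ S : Set V, (G.partialComplement S).IsSplit) ↔
    ∃ X₁ X₂ X₃ X₄ : Set V,
      X₁ ∪ X₂ ∪ X₃ ∪ X₄ = Set.univ ∧
      Disjoint X₁ X₂ ∧ Disjoint X₁ X₃ ∧ Disjoint X₁ X₄ ∧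
      Disjoint X₂ X₃ ∧ Disjoint X₂ X₄ ∧ Disjoint X₃ X₄ ∧
      G.IsClique X₁ ∧ G.IsIndepSet' X₂ ∧
      (∀ x ∈ X₁, ∀ y ∈ X₂, ¬ G.Adj x y) ∧
      G.IsIndepSet' X₃ ∧ G.IsClique X₄ ∧
      (∀ x ∈ X₃, ∀ y ∈ X₄, G.Adj x y) := by

  constructor
  · rintro ⟨S, C, I, hUn, hDisj, hC, hI⟩
    have hd : ∀ a, a ∈ C → a ∉ I := fun a ha hb => Set.disjoint_left.mp hDisj ha hb
    refine ⟨I ∩ S, I \ S, C ∩ S, C \ S, ?_, ?_, ?_, ?_, ?_, ?_, ?_, ?_, ?_, ?_, ?_, ?_, ?_⟩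
    · ext a
      simp only [Set.mem_union, Set.mem_inter_iff, Set.mem_diff, Set.mem_univ, iff_true]
      have : a ∈ C ∪ I := hUn ▸ Set.mem_univ a
      by_cases haS : a ∈ S <;> rcases this with h | h <;> tauto
    · rw [Set.disjoint_left]; rintro a ⟨_, h⟩ ⟨_, h'⟩; exact h' h
    · rw [Set.disjoint_left]; rintro a ⟨h, _⟩ ⟨h', _⟩; exact hd a h' h
    · rw [Set.disjoint_left]; rintro a ⟨h, _⟩ ⟨h', _⟩; exact hd a h' h
    · rw [Set.disjoint_left]; rintro a ⟨h, _⟩ ⟨h', _⟩; exact hd a h' h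
    · rw [Set.disjoint_left]; rintro a ⟨h, _⟩ ⟨h', _⟩; exact hd a h' h
    · rw [Set.disjoint_left]; rintro a ⟨_, h⟩ ⟨_, h'⟩; exact h' h
    · -- I ∩ S is a clique in G
      intro x hx y hy hne
      by_contra hna
      exact hI hx.1 hy.1 hne ((pc_adj_of_both hx.2 hy.2).mpr ⟨hne, hna⟩)
    · -- I \ S is independent in G
      intro x hx y hy hne hna
      exact hI hx.1 hy.1 hne ((pc_adj_of_not_both fun h => hx.2 h.1).mpr hna)
    · -- no edges between I ∩ S and I \ S
      intro x hx y hy hna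
      have hne : x ≠ y := hna.ne
      exact hI hx.1 hy.1 hne ((pc_adj_of_not_both fun h => hy.2 h.2).mpr hna)
    · -- C ∩ S is independent in G
      intro x hx y hy hne hna
      exact ((pc_adj_of_both hx.2 hy.2).mp (hC hx.1 hy.1 hne)).2 hna
    · -- C \ S is a clique in G
      intro x hx y hy hne
      exact (pc_adj_of_not_both fun h => hx.2 h.1).mp (hC hx.1 hy.1 hne)
    · -- all edges between C ∩ S and C \ S
      intro x hx y hy
      have hne : x ≠ y := fun h => hy.2 (h ▸ hx.2)
      exact (pc_adj_of_not_both fun h => hy.2 h.2).mp (hC hx.1 hy.1 hne)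
  · rintro ⟨X₁, X₂, X₃, X₄, hUn, h12, h13, h14, h23, h24, h34, hK1, hI2, hE12, hI3, hK4, hE34⟩
    refine ⟨X₁ ∪ X₃, X₃ ∪ X₄, X₁ ∪ X₂, ?_, ?_, ?_, ?_⟩
    · ext a
      have : a ∈ X₁ ∪ X₂ ∪ X₃ ∪ X₄ := hUn ▸ Set.mem_univ a
      simp only [Set.mem_union, Set.mem_univ, iff_true] at this ⊢
      tauto
    · rw [Set.disjoint_left]
      rintro a (h | h) (h' | h')
      · exact Set.disjoint_left.mp h13 h' h
      · exact Set.disjoint_left.mp h23 h' h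
      · exact Set.disjoint_left.mp h14 h' h
      · exact Set.disjoint_left.mp h24 h' h
    · -- X₃ ∪ X₄ is a clique in G ⊕ S
      rintro x (hx | hx) y (hy | hy) hne
      · exact (pc_adj_of_both (Set.mem_union_right _ hx) (Set.mem_union_right _ hy)).mpr ⟨hne, hI3 hx hy hne⟩
      · refine (pc_adj_of_not_both ?_).mpr (hE34 x hx y hy)
        rintro ⟨-, h1 | h3⟩
        · exact Set.disjoint_left.mp h14 h1 hy
        · exact Set.disjoint_left.mp h34 h3 hy
      · refine (pc_adj_of_not_both ?_).mpr ((hE34 y hy x hx).symm)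
        rintro ⟨h1 | h3, -⟩
        · exact Set.disjoint_left.mp h14 h1 hx
        · exact Set.disjoint_left.mp h34 h3 hx
      · refine (pc_adj_of_not_both ?_).mpr (hK4 hx hy hne)
        rintro ⟨h1 | h3, -⟩
        · exact Set.disjoint_left.mp h14 h1 hx
        · exact Set.disjoint_left.mp h34 h3 hx
    · -- X₁ ∪ X₂ is independent in G ⊕ S
      rintro x (hx | hx) y (hy | hy) hne hadj
      · exact ((pc_adj_of_both (Set.mem_union_left _ hx) (Set.mem_union_left _ hy)).mp hadj).2 (hK1 hx hy hne)
      · have hns : ¬ (x ∈ X₁ ∪ X₃ ∧ y ∈ X₁ ∪ X₃) := by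
          rintro ⟨-, h1 | h3⟩
          · exact Set.disjoint_left.mp h12 h1 hy
          · exact Set.disjoint_left.mp h23 hy h3
        exact hE12 x hx y hy ((pc_adj_of_not_both hns).mp hadj)
      · have hns : ¬ (x ∈ X₁ ∪ X₃ ∧ y ∈ X₁ ∪ X₃) := by
          rintro ⟨h1 | h3, -⟩
          · exact Set.disjoint_left.mp h12 h1 hx
          · exact Set.disjoint_left.mp h23 hx h3
        exact hE12 y hy x hx ((pc_adj_of_not_both hns).mp hadj).symm
      · have hns : ¬ (x ∈ X₁ ∪ X₃ ∧ y ∈ X₁ ∪ X₃) := by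
          rintro ⟨h1 | h3, -⟩
          · exact Set.disjoint_left.mp h12 h1 hx
          · exact Set.disjoint_left.mp h23 hx h3
        exact hI2 hx hy hne ((pc_adj_of_not_both hns).mp hadj)
end

section
/- Let G be a finite simple graph. There exists a set S ⊆ V(G) such that G ⊕ S is bipartite if and only if V(G) can be partitioned into four (possibly empty) sets X₁, X₂, X₃, X₄ such that: X₁ is a clique in G, X₂ is an independent set in G, there is no edge of G between X₁ and X₂, X₃ is a clique in G, X₄ is an independent set in G, and there is no edge of G between X₃ and X₄. -/
/-- A bipartite graph: the vertex set can be partitioned into two independent sets. -/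
def SimpleGraph.IsBipartite' {V : Type*} (G : SimpleGraph V) : Prop :=
  ∃ A B : Set V, A ∪ B = Set.univ ∧ Disjoint A B ∧ G.IsIndepSet' A ∧ G.IsIndepSet' B

/-- Some partial complement of `G` is bipartite iff `V(G)` can be partitioned into
four (possibly empty) sets `X₁, X₂, X₃, X₄` such that `X₁` is a clique, `X₂` is an
independent set, there is no edge between `X₁` and `X₂`, `X₃` is a clique, `X₄` is an
independent set, and there is no edge between `X₃` and `X₄`. -/
theorem partialComplement_bipartite_iff {V : Type*} [Fintype V] (G : SimpleGraph V) :
    (∃ S : Set V, (G.partialComplement S).IsBipartite') ↔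
    ∃ X₁ X₂ X₃ X₄ : Set V,
      X₁ ∪ X₂ ∪ X₃ ∪ X₄ = Set.univ ∧
      Disjoint X₁ X₂ ∧ Disjoint X₁ X₃ ∧ Disjoint X₁ X₄ ∧
      Disjoint X₂ X₃ ∧ Disjoint X₂ X₄ ∧ Disjoint X₃ X₄ ∧
      G.IsClique X₁ ∧ G.IsIndepSet' X₂ ∧
      (∀ x ∈ X₁, ∀ y ∈ X₂, ¬ G.Adj x y) ∧
      G.IsClique X₃ ∧ G.IsIndepSet' X₄ ∧
      (∀ x ∈ X₃, ∀ y ∈ X₄, ¬ G.Adj x y) := by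
  constructor
  · rintro ⟨S, A, B, hunion, hdisj, hA, hB⟩
    refine ⟨A ∩ S, A \ S, B ∩ S, B \ S, ?_, ?_, ?_, ?_, ?_, ?_, ?_, ?_, ?_, ?_, ?_, ?_, ?_⟩
    · ext v; simp only [Set.mem_union, Set.mem_inter_iff, Set.mem_diff, Set.mem_univ, iff_true]
      have hv : v ∈ A ∪ B := hunion ▸ Set.mem_univ v
      rcases hv with h | h
      · by_cases hs : v ∈ S
        · exact Or.inl (Or.inl (Or.inl ⟨h, hs⟩))
        · exact Or.inl (Or.inl (Or.inr ⟨h, hs⟩))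
      · by_cases hs : v ∈ S
        · exact Or.inl (Or.inr ⟨h, hs⟩)
        · exact Or.inr ⟨h, hs⟩
    · exact Set.disjoint_left.mpr fun x hx hy => hy.2 hx.2
    · exact Set.disjoint_left.mpr fun x hx hy =>
        Set.disjoint_left.mp hdisj hx.1 hy.1
    · exact Set.disjoint_left.mpr fun x hx hy =>
        Set.disjoint_left.mp hdisj hx.1 hy.1
    · exact Set.disjoint_left.mpr fun x hx hy =>
        Set.disjoint_left.mp hdisj hx.1 hy.1
    · exact Set.disjoint_left.mpr fun x hx hy =>
        Set.disjoint_left.mp hdisj hx.1 hy.1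
    · exact Set.disjoint_left.mpr fun x hx hy => hy.2 hx.2
    · intro x hx y hy hne
      have := hA hx.1 hy.1 hne
      by_contra hadj
      exact this ⟨hne, Or.inr ⟨hadj, hx.2, hy.2⟩⟩
    · intro x hx y hy hne hadj
      exact hA hx.1 hy.1 hne ⟨hne, Or.inl ⟨hadj, fun hc => hx.2 hc.1⟩⟩
    · intro x hx y hy hadj
      have hne : x ≠ y := hadj.ne
      exact hA hx.1 hy.1 hne ⟨hne, Or.inl ⟨hadj, fun hc => hy.2 hc.2⟩⟩
    · intro x hx y hy hne
      have := hB hx.1 hy.1 hne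
      by_contra hadj
      exact this ⟨hne, Or.inr ⟨hadj, hx.2, hy.2⟩⟩
    · intro x hx y hy hne hadj
      exact hB hx.1 hy.1 hne ⟨hne, Or.inl ⟨hadj, fun hc => hx.2 hc.1⟩⟩
    · intro x hx y hy hadj
      have hne : x ≠ y := hadj.ne
      exact hB hx.1 hy.1 hne ⟨hne, Or.inl ⟨hadj, fun hc => hy.2 hc.2⟩⟩
  · rintro ⟨X₁, X₂, X₃, X₄, hunion, h12, h13, h14, h23, h24, h34, hc1, hi2, he12,
      hc3, hi4, he34⟩
    refine ⟨X₁ ∪ X₃, X₁ ∪ X₂, X₃ ∪ X₄, ?_, ?_, ?_, ?_⟩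
    · rw [← hunion]; ext v; simp [Set.mem_union]; tauto
    · rw [Set.disjoint_union_left, Set.disjoint_union_right, Set.disjoint_union_right]
      exact ⟨⟨h13, h14⟩, h23, h24⟩
    · rintro x hx y hy hne ⟨-, ⟨hadj, hns⟩ | ⟨hnadj, hxs, hys⟩⟩
      · rcases hx with hx | hx <;> rcases hy with hy | hy
        · exact hns ⟨Or.inl hx, Or.inl hy⟩
        · exact he12 x hx y hy hadj
        · exact he12 y hy x hx hadj.symm
        · exact hi2 hx hy hne hadj
      · rcases hx with hx | hx <;> rcases hy with hy | hy
        · exact hnadj (hc1 hx hy hne)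
        · rcases hys with hy' | hy'
          · exact Set.disjoint_left.mp h12 hy' hy
          · exact Set.disjoint_left.mp h23 hy hy'
        · rcases hxs with hx' | hx'
          · exact Set.disjoint_left.mp h12 hx' hx
          · exact Set.disjoint_left.mp h23 hx hx'
        · rcases hxs with hx' | hx'
          · exact Set.disjoint_left.mp h12 hx' hx
          · exact Set.disjoint_left.mp h23 hx hx'
    · rintro x hx y hy hne ⟨-, ⟨hadj, hns⟩ | ⟨hnadj, hxs, hys⟩⟩
      · rcases hx with hx | hx <;> rcases hy with hy | hy
        · exact hns ⟨Or.inr hx, Or.inr hy⟩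
        · exact he34 x hx y hy hadj
        · exact he34 y hy x hx hadj.symm
        · exact hi4 hx hy hne hadj
      · rcases hx with hx | hx <;> rcases hy with hy | hy
        · exact hnadj (hc3 hx hy hne)
        · rcases hys with hy' | hy'
          · exact Set.disjoint_left.mp h14 hy' hy
          · exact Set.disjoint_left.mp h34 hy' hy
        · rcases hxs with hx' | hx'
          · exact Set.disjoint_left.mp h14 hx' hx
          · exact Set.disjoint_left.mp h34 hx' hx
        · rcases hxs with hx' | hx'
          · exact Set.disjoint_left.mp h14 hx' hx
          · exact Set.disjoint_left.mp h34 hx' hx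
end

section
/- Let G be a finite simple graph, d a nonnegative integer, S ⊆ V(G), and X ⊆ S with |X| = 2d + 1. Let Y be the set of vertices v ∈ V(G) \ X having at least d + 1 neighbors in X. If |Y \ S| > (d + 1) · C(2d+1, d+1), then there exist a set A ⊆ Y \ S with |A| = d + 1 and a set B ⊆ X with |B| = d + 1 such that every vertex of A is adjacent to every vertex of B in G ⊕ S; in particular, G ⊕ S contains K_{d+1,d+1} as a subgraph. -/
/-- Degenerate large-`Y` case: if `X ⊆ S` has size `2d+1` and more than
`(d+1)·C(2d+1, d+1)` vertices outside `S` (and outside `X`) have at least `d+1`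
neighbors in `X`, then `G ⊕ S` contains `K_{d+1,d+1}` as a subgraph, with one side
inside `Y \ S` and the other inside `X`. -/
theorem partialComplement_completeBipartite_of_many_high_degree {V : Type*} [Fintype V]
    (G : SimpleGraph V) (d : ℕ) (S : Set V) (X : Set V)
    (hXS : X ⊆ S) (hX : X.ncard = 2 * d + 1) :
    let Y : Set V := {v | v ∉ X ∧ d + 1 ≤ (G.neighborSet v ∩ X).ncard}
    (d + 1) * Nat.choose (2 * d + 1) (d + 1) < (Y \ S).ncard →
    ∃ A B : Set V, A ⊆ Y \ S ∧ B ⊆ X ∧ A.ncard = d + 1 ∧ B.ncard = d + 1 ∧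
      ∀ a ∈ A, ∀ b ∈ B, (G.partialComplement S).Adj a b := by
  classical
  intro Y hY
  set T : Set V := Y \ S with hTdef
  -- for each v ∈ T choose a (d+1)-subset of its neighborhood in X
  have hchoice : ∀ v, v ∈ T → ∃ b : Finset V,
      b ⊆ (G.neighborSet v ∩ X).toFinset ∧ b.card = d + 1 := by
    intro v hv
    have hv' : d + 1 ≤ (G.neighborSet v ∩ X).toFinset.card := by
      rw [← Set.ncard_eq_toFinset_card']
      exact hv.1.2
    obtain ⟨t, ht, htc⟩ := Finset.exists_subset_card_eq hv'
    exact ⟨t, ht, htc⟩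
  set f : V → Finset V := fun v =>
    if h : v ∈ T then Classical.choose (hchoice v h) else ∅ with hfdef
  have hfsub : ∀ v (h : v ∈ T), f v ⊆ (G.neighborSet v ∩ X).toFinset := by
    intro v h; simp only [hfdef, dif_pos h]
    exact (Classical.choose_spec (hchoice v h)).1
  have hfcard : ∀ v (h : v ∈ T), (f v).card = d + 1 := by
    intro v h; simp only [hfdef, dif_pos h]
    exact (Classical.choose_spec (hchoice v h)).2
  -- pigeonhole
  have hmaps : ∀ v ∈ T.toFinset, f v ∈ X.toFinset.powersetCard (d + 1) := by
    intro v hv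
    rw [Set.mem_toFinset] at hv
    rw [Finset.mem_powersetCard]
    refine ⟨(hfsub v hv).trans ?_, hfcard v hv⟩
    intro x hx
    rw [Set.mem_toFinset] at hx ⊢
    exact hx.2
  have hXcard : X.toFinset.card = 2 * d + 1 := by
    rw [← Set.ncard_eq_toFinset_card']; exact hX
  have hlt : (X.toFinset.powersetCard (d + 1)).card * (d + 1) < T.toFinset.card := by
    rw [Finset.card_powersetCard, hXcard, ← Set.ncard_eq_toFinset_card']
    rw [Nat.mul_comm]
    exact hY
  obtain ⟨y, hy, hylt⟩ :=
    Finset.exists_lt_card_fiber_of_mul_lt_card_of_maps_to hmaps hlt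
  rw [Finset.mem_powersetCard] at hy
  obtain ⟨A', hA'sub, hA'card⟩ :=
    Finset.exists_subset_card_eq (n := d + 1) hylt.le
  refine ⟨↑A', ↑y, ?_, ?_, ?_, ?_, ?_⟩
  · intro a ha
    have := hA'sub ha
    rw [Finset.mem_filter, Set.mem_toFinset] at this
    exact this.1
  · intro b hb
    have := hy.1 hb
    rwa [Set.mem_toFinset] at this
  · rw [Set.ncard_coe_finset]; exact hA'card
  · rw [Set.ncard_coe_finset]; exact hy.2
  · intro a ha b hb
    have haF := hA'sub ha
    rw [Finset.mem_filter, Set.mem_toFinset] at haF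
    obtain ⟨haT, hfa⟩ := haF
    have hb' : b ∈ f a := by rw [hfa]; exact hb
    have hbm := hfsub a haT hb'
    rw [Set.mem_toFinset] at hbm
    obtain ⟨hadj, hbX⟩ := hbm
    have haS : a ∉ S := haT.2
    have hne : a ≠ b := by
      intro h; exact haT.1.1 (h ▸ hbX)
    exact ⟨hne, Or.inl ⟨hadj, fun hc => haS hc.1⟩⟩
end

section
/- Let G be a finite simple graph, d a nonnegative integer, S ⊆ V(G), and X ⊆ S with |X| = 2d + 1. Let Z be the set of vertices v ∈ V(G) \ X having at most d neighbors in X. If |Z ∩ S| > (d + 1) · C(2d+1, d+1), then there exist a set A ⊆ Z ∩ S with |A| = d + 1 and a set B ⊆ X with |B| = d + 1 such that every vertex of A is adjacent to every vertex of B in G ⊕ S; in particular, G ⊕ S contains K_{d+1,d+1} as a subgraph. -/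
/-- Degenerate large-`Z` case: if `X ⊆ S` has size `2d+1` and more than
`(d+1)·C(2d+1, d+1)` vertices of `S` (outside `X`) have at most `d` neighbors in `X`,
then `G ⊕ S` contains `K_{d+1,d+1}` as a subgraph, with one side inside `Z ∩ S` and
the other inside `X`. -/
theorem partialComplement_completeBipartite_of_many_low_degree {V : Type*} [Fintype V]
    (G : SimpleGraph V) (d : ℕ) (S : Set V) (X : Set V)
    (hXS : X ⊆ S) (hX : X.ncard = 2 * d + 1) :
    let Z : Set V := {v | v ∉ X ∧ (G.neighborSet v ∩ X).ncard ≤ d}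
    (d + 1) * Nat.choose (2 * d + 1) (d + 1) < (Z ∩ S).ncard →
    ∃ A B : Set V, A ⊆ Z ∩ S ∧ B ⊆ X ∧ A.ncard = d + 1 ∧ B.ncard = d + 1 ∧
      ∀ a ∈ A, ∀ b ∈ B, (G.partialComplement S).Adj a b := by

  classical
  intro Z hcard
  set T : Set V := Z ∩ S with hT
  have hTfin : T.Finite := Set.toFinite _
  have hXfin : X.Finite := Set.toFinite _
  -- choose for each v in T a (d+1)-set of non-neighbors in X
  have hchoose : ∀ v ∈ hTfin.toFinset,
      ∃ b : Finset V, ↑b ⊆ X \ G.neighborSet v ∧ b.card = d + 1 := by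
    intro v hv
    have hvT : v ∈ T := hTfin.mem_toFinset.mp hv
    have hvZ : v ∈ Z := hvT.1
    have hle : (G.neighborSet v ∩ X).ncard ≤ d := hvZ.2
    have hdiff : d + 1 ≤ (X \ G.neighborSet v).ncard := by
      have h1 : (X ∩ G.neighborSet v).ncard + (X \ G.neighborSet v).ncard = X.ncard :=
        Set.ncard_inter_add_ncard_diff_eq_ncard X (G.neighborSet v) hXfin
      have h2 : (X ∩ G.neighborSet v).ncard ≤ d := by
        rwa [Set.inter_comm] at hle
      omega
    have hfin : (X \ G.neighborSet v).Finite := hXfin.subset Set.diff_subset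
    have hle' : d + 1 ≤ hfin.toFinset.card := by
      rwa [Set.ncard_eq_toFinset_card _ hfin] at hdiff
    obtain ⟨b, hbsub, hbcard⟩ := Finset.exists_subset_card_eq hle'
    refine ⟨b, ?_, hbcard⟩
    intro x hx
    exact hfin.mem_toFinset.mp (hbsub hx)
  choose! f hfsub hfcard using hchoose
  -- pigeonhole over (d+1)-subsets of X
  have hmaps : ∀ v ∈ hTfin.toFinset, f v ∈ hXfin.toFinset.powersetCard (d + 1) := by
    intro v hv
    refine Finset.mem_powersetCard.mpr ⟨?_, hfcard v hv⟩
    intro x hx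
    exact hXfin.mem_toFinset.mpr ((hfsub v hv hx).1)
  have hXcard : hXfin.toFinset.card = 2 * d + 1 := by
    rwa [Set.ncard_eq_toFinset_card _ hXfin] at hX
  have hpcard : (hXfin.toFinset.powersetCard (d + 1)).card = Nat.choose (2 * d + 1) (d + 1) := by
    rw [Finset.card_powersetCard, hXcard]
  have hTcard : (d + 1) * Nat.choose (2 * d + 1) (d + 1) < hTfin.toFinset.card := by
    rwa [← Set.ncard_eq_toFinset_card _ hTfin]
  obtain ⟨y, hy, hylt⟩ := Finset.exists_lt_card_fiber_of_mul_lt_card_of_maps_to hmaps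
    (by rw [hpcard, mul_comm]; exact hTcard)
  obtain ⟨A₀, hA₀sub, hA₀card⟩ := Finset.exists_subset_card_eq (n := d + 1) hylt.le
  obtain ⟨hyX, hycard⟩ := Finset.mem_powersetCard.mp hy
  refine ⟨↑A₀, ↑y, ?_, ?_, ?_, ?_, ?_⟩
  · intro a ha
    have := hA₀sub ha
    exact hTfin.mem_toFinset.mp (Finset.mem_filter.mp this).1
  · intro b hb
    exact hXfin.mem_toFinset.mp (hyX hb)
  · rw [Set.ncard_coe_finset, hA₀card]
  · rw [Set.ncard_coe_finset, hycard]
  · intro a ha b hb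
    have haF := hA₀sub ha
    have haT : a ∈ hTfin.toFinset := (Finset.mem_filter.mp haF).1
    have hfa : f a = y := (Finset.mem_filter.mp haF).2
    have hbfa : b ∈ f a := by rw [hfa]; exact hb
    have hbX : b ∈ X ∧ b ∉ G.neighborSet a := hfsub a haT hbfa
    have haT' : a ∈ T := hTfin.mem_toFinset.mp haT
    refine ⟨?_, Or.inr ⟨hbX.2, haT'.2, hXS hbX.1⟩⟩
    intro h
    exact haT'.1.1 (h ▸ hbX.1)
end

section
/- Let k ≥ 2 and r > k be integers with r − k even. Let G be a finite simple r-regular graph containing a clique C with |C| = k, and let G' be the disjoint union of G and the gadget graph gdg_{k,r}. Let S = C ∪ {c_1, …, c_{k−1}} (the clique C together with the clique vertices of the gadget). Then G' ⊕ S is r-regular. -/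
/-- The vertex type of the gadget `gdg_{k,r}`: `Sum.inl i` is the clique vertex
`c_{i+1}`, and `Sum.inr (i, j, false)` / `Sum.inr (i, j, true)` are the vertices
`a^{i+1}_{j+1}` / `b^{i+1}_{j+1}` respectively. -/
abbrev GadgetVertex (k r : ℕ) := Fin (k - 1) ⊕ (Fin (k - 1) × Fin r × Bool)

/-- The gadget graph `gdg_{k,r}`: the vertices `c_1, …, c_{k-1}` form a clique; for each
`i`, the vertices `a^i_1, …, a^i_r, b^i_1, …, b^i_r` form a complete bipartite graph
`K_{r,r}` minus the matching `{a^i_j b^i_j : j ≤ (r-k)/2}`; and `c_i` is joined to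
`a^i_j` and `b^i_j` for all `j ≤ (r-k)/2`. -/
def gadgetGraph (k r : ℕ) : SimpleGraph (GadgetVertex k r) :=
  SimpleGraph.fromRel (fun x y =>
    match x, y with
    | Sum.inl _, Sum.inl _ => True
    | Sum.inl i, Sum.inr (i', j, _) => i = i' ∧ (j : ℕ) < (r - k) / 2
    | Sum.inr (i', j, _), Sum.inl i => i = i' ∧ (j : ℕ) < (r - k) / 2
    | Sum.inr (i, j, s), Sum.inr (i', l, t) =>
        i = i' ∧ s ≠ t ∧ ¬(j = l ∧ (j : ℕ) < (r - k) / 2))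

section Aux

open Set

private lemma pc_adj {W : Type*} (H : SimpleGraph W) (S : Set W) (u v : W) :
    (H.partialComplement S).Adj u v ↔
      u ≠ v ∧ ((H.Adj u v ∧ ¬(u ∈ S ∧ v ∈ S)) ∨ (¬ H.Adj u v ∧ u ∈ S ∧ v ∈ S)) := Iff.rfl

private lemma ncard_fin_lt {r m : ℕ} (h : m < r) :
    {j : Fin r | (j : ℕ) < m}.ncard = m := by
  have he : {j : Fin r | (j : ℕ) < m} = (Finset.Iio (⟨m, h⟩ : Fin r) : Set (Fin r)) := by
    ext j; simp [Fin.lt_def]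
  rw [he, Set.ncard_coe_finset, Fin.card_Iio]

private lemma ncard_prod_bool {α : Type*} [Finite α] (A : Set α) :
    {q : α × Bool | q.1 ∈ A}.ncard = A.ncard + A.ncard := by
  have h1 : {q : α × Bool | q.1 ∈ A} =
      (fun a => (a, false)) '' A ∪ (fun a => (a, true)) '' A := by
    ext ⟨a, b⟩; cases b <;> simp
  have hinj0 : Function.Injective (fun a : α => (a, false)) := fun a b h => by simpa using h
  have hinj1 : Function.Injective (fun a : α => (a, true)) := fun a b h => by simpa using h
  have hd : Disjoint ((fun a : α => (a, false)) '' A) ((fun a : α => (a, true)) '' A) := by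
    rw [Set.disjoint_left]
    rintro q ⟨a, _, rfl⟩ ⟨b, _, hb⟩
    simp at hb
  rw [h1, Set.ncard_union_eq hd (Set.toFinite _) (Set.toFinite _),
    Set.ncard_image_of_injective _ hinj0, Set.ncard_image_of_injective _ hinj1]

private lemma disjoint_inl_inr {α β : Type*} (X : Set α) (Y : Set β) :
    Disjoint (Sum.inl '' X) (Sum.inr '' Y : Set (α ⊕ β)) := by
  rw [Set.disjoint_left]
  rintro z ⟨a, _, rfl⟩ ⟨b, _, h⟩
  simp at h

end Aux

/-- If `G` is `r`-regular and contains a clique `C` of size `k` (with `2 ≤ k < r`,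
`r - k` even), then partially complementing the disjoint union `G' = G ⊔ gdg_{k,r}`
with respect to `S = C ∪ {c_1, …, c_{k-1}}` yields an `r`-regular graph (degrees are
measured as the cardinalities of neighbor sets). -/
theorem partialComplement_disjUnion_gadget_regular {V : Type*} [Fintype V]
    (G : SimpleGraph V) (k r : ℕ) (hk : 2 ≤ k) (hkr : k < r)
    (heven : Even (r - k))
    (hreg : ∀ v : V, (G.neighborSet v).ncard = r)
    (C : Set V) (hC : G.IsClique C) (hCcard : C.ncard = k) :
    ∀ x : V ⊕ GadgetVertex k r,
      (((G ⊕g gadgetGraph k r).partialComplement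
          (Sum.inl '' C ∪ Sum.inr '' (Set.range Sum.inl))).neighborSet x).ncard = r := by
  classical
  intro x
  set m := (r - k) / 2 with hm
  have hm2 : m + m = r - k := by
    obtain ⟨t, ht⟩ := heven; omega
  have hmr : m < r := by omega
  set S : Set (V ⊕ GadgetVertex k r) :=
    Sum.inl '' C ∪ Sum.inr '' (Set.range Sum.inl) with hS
  have hSinl : ∀ v : V, (Sum.inl v ∈ S) ↔ v ∈ C := by intro v; simp [hS]
  have hSc : ∀ i : Fin (k - 1), (Sum.inr (Sum.inl i) : V ⊕ GadgetVertex k r) ∈ S := by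
    intro i; simp [hS]
  have hSab : ∀ p : Fin (k - 1) × Fin r × Bool,
      (Sum.inr (Sum.inr p) : V ⊕ GadgetVertex k r) ∉ S := by
    intro p; simp [hS]
  have adj_ll : ∀ u v : V, (G ⊕g gadgetGraph k r).Adj (Sum.inl u) (Sum.inl v) ↔ G.Adj u v := by
    intro u v; simp [SimpleGraph.sum_adj]
  have adj_lr : ∀ (u : V) (w : GadgetVertex k r),
      ¬ (G ⊕g gadgetGraph k r).Adj (Sum.inl u) (Sum.inr w) := by
    intro u w; simp [SimpleGraph.sum_adj]
  have adj_rl : ∀ (w : GadgetVertex k r) (u : V),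
      ¬ (G ⊕g gadgetGraph k r).Adj (Sum.inr w) (Sum.inl u) := by
    intro w u; simp [SimpleGraph.sum_adj]
  have adj_rr : ∀ w w' : GadgetVertex k r,
      (G ⊕g gadgetGraph k r).Adj (Sum.inr w) (Sum.inr w') ↔ (gadgetGraph k r).Adj w w' := by
    intro w w'; simp [SimpleGraph.sum_adj]
  have gadj_ll : ∀ i i' : Fin (k - 1),
      (gadgetGraph k r).Adj (Sum.inl i) (Sum.inl i') ↔ i ≠ i' := by
    intro i i'; simp [gadgetGraph, SimpleGraph.fromRel_adj]
  have gadj_lr : ∀ (i : Fin (k - 1)) (p : Fin (k - 1) × Fin r × Bool),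
      (gadgetGraph k r).Adj (Sum.inl i) (Sum.inr p) ↔ i = p.1 ∧ (p.2.1 : ℕ) < m := by
    intro i p; obtain ⟨i', l, t⟩ := p
    simp [gadgetGraph, SimpleGraph.fromRel_adj, hm]
  have gadj_rr : ∀ p q : Fin (k - 1) × Fin r × Bool,
      (gadgetGraph k r).Adj (Sum.inr p) (Sum.inr q) ↔
        p.1 = q.1 ∧ p.2.2 ≠ q.2.2 ∧ ¬(p.2.1 = q.2.1 ∧ (p.2.1 : ℕ) < m) := by
    intro p q; obtain ⟨i, j, s⟩ := p; obtain ⟨i', l, t⟩ := q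
    rw [gadgetGraph, SimpleGraph.fromRel_adj]
    constructor
    · rintro ⟨hne, (⟨h1, h2, h3⟩ | ⟨h1, h2, h3⟩)⟩
      · exact ⟨h1, h2, h3⟩
      · refine ⟨h1.symm, h2.symm, ?_⟩
        rintro ⟨rfl, hlt⟩; exact h3 ⟨rfl, hlt⟩
    · rintro ⟨h1, h2, h3⟩
      refine ⟨?_, Or.inl ⟨h1, h2, h3⟩⟩
      intro hc
      simp only [Sum.inr.injEq, Prod.mk.injEq] at hc
      exact h2 hc.2.2
  obtain (v | (i | ⟨i, j, s⟩)) := x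
  · -- x = Sum.inl v
    by_cases hv : v ∈ C
    · -- v ∈ C
      have hset : ((G ⊕g gadgetGraph k r).partialComplement S).neighborSet (Sum.inl v) =
          Sum.inl '' (G.neighborSet v \ C) ∪
            Sum.inr '' (Set.range (Sum.inl : Fin (k - 1) → GadgetVertex k r)) := by
        ext y
        obtain (u | w) := y
        · simp only [SimpleGraph.mem_neighborSet, pc_adj, adj_ll, hSinl, Set.mem_union,
            Set.mem_image, Set.mem_diff, SimpleGraph.mem_neighborSet, ne_eq, Sum.inl.injEq]
          constructor
          · rintro ⟨hne, (⟨ha, hns⟩ | ⟨hna, hvC, huC⟩)⟩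
            · exact Or.inl ⟨u, ⟨ha, fun huC => hns ⟨hv, huC⟩⟩, rfl⟩
            · exact absurd (hC hv huC hne) hna
          · rintro (⟨u', ⟨ha, hnC⟩, hu⟩ | ⟨w, _, hw⟩)
            · obtain rfl : u' = u := hu
              exact ⟨fun e => G.irrefl (e ▸ ha), Or.inl ⟨ha, fun hp => hnC hp.2⟩⟩
            · exact absurd hw (by simp)
        · simp only [SimpleGraph.mem_neighborSet, pc_adj, Set.mem_union, Set.mem_image]
          constructor
          · rintro ⟨hne, (⟨ha, _⟩ | ⟨_, _, hwS⟩)⟩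
            · exact absurd ha (adj_lr v w)
            · rcases (by simpa [hS] using hwS : w ∈ Set.range (Sum.inl : Fin (k-1) → _)) with ⟨i, rfl⟩
              exact Or.inr ⟨Sum.inl i, ⟨i, rfl⟩, rfl⟩
          · rintro (⟨u, _, hu⟩ | ⟨w', hw', hww⟩)
            · exact absurd hu (by simp)
            · obtain rfl : w' = w := Sum.inr.inj hww
              exact ⟨by simp, Or.inr ⟨adj_lr _ _, (hSinl v).2 hv, by
                rcases hw' with ⟨i, rfl⟩; exact hSc i⟩⟩
      rw [hset, Set.ncard_union_eq (disjoint_inl_inr _ _) (Set.toFinite _) (Set.toFinite _),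
        Set.ncard_image_of_injective _ Sum.inl_injective,
        Set.ncard_image_of_injective _ Sum.inr_injective]
      have hsub : C \ {v} ⊆ G.neighborSet v := by
        rintro u ⟨huC, hne⟩
        exact hC hv huC (fun e => hne (by simp [← e]))
      have hNC : G.neighborSet v \ C = G.neighborSet v \ (C \ {v}) := by
        ext u
        simp only [Set.mem_diff, Set.mem_singleton_iff]
        constructor
        · rintro ⟨h1, h2⟩; exact ⟨h1, fun h => h2 h.1⟩
        · rintro ⟨h1, h2⟩
          refine ⟨h1, fun hc => h2 ⟨hc, ?_⟩⟩
          rintro rfl; exact G.irrefl h1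
      have hC1 : (C \ {v}).ncard = k - 1 := by
        rw [Set.ncard_diff_singleton_of_mem hv, hCcard]
      rw [hNC, Set.ncard_diff hsub (Set.toFinite _), hC1, hreg v,
        ← Set.image_univ, Set.ncard_image_of_injective _ Sum.inl_injective,
        Set.ncard_univ, Nat.card_eq_fintype_card, Fintype.card_fin]
      omega
    · -- v ∉ C
      have hset : ((G ⊕g gadgetGraph k r).partialComplement S).neighborSet (Sum.inl v) =
          Sum.inl '' G.neighborSet v := by
        ext y
        obtain (u | w) := y
        · simp only [SimpleGraph.mem_neighborSet, pc_adj, adj_ll, hSinl, Set.mem_image,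
            Sum.inl.injEq, ne_eq, SimpleGraph.mem_neighborSet]
          constructor
          · rintro ⟨hne, (⟨ha, _⟩ | ⟨_, hvC, _⟩)⟩
            · exact ⟨u, ha, rfl⟩
            · exact absurd hvC hv
          · rintro ⟨u', ha, hu⟩
            obtain rfl : u' = u := hu
            exact ⟨fun e => G.irrefl (e ▸ ha), Or.inl ⟨ha, fun hp => hv hp.1⟩⟩
        · simp only [SimpleGraph.mem_neighborSet, pc_adj, hSinl, Set.mem_image]
          constructor
          · rintro ⟨hne, (⟨ha, _⟩ | ⟨_, hvC, _⟩)⟩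
            · exact absurd ha (adj_lr v w)
            · exact absurd hvC hv
          · rintro ⟨u, _, hu⟩
            exact absurd hu (by simp)
      rw [hset, Set.ncard_image_of_injective _ Sum.inl_injective, hreg v]
  · -- x = Sum.inr (Sum.inl i)
    have hset : ((G ⊕g gadgetGraph k r).partialComplement S).neighborSet (Sum.inr (Sum.inl i)) =
        Sum.inl '' C ∪ Sum.inr '' (Sum.inr ''
          {p : Fin (k - 1) × Fin r × Bool | p.1 = i ∧ (p.2.1 : ℕ) < m}) := by
      ext y
      obtain (u | (i' | p)) := y
      · simp only [SimpleGraph.mem_neighborSet, pc_adj, hSinl, Set.mem_union, Set.mem_image]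
        constructor
        · rintro ⟨hne, (⟨ha, _⟩ | ⟨_, _, huS⟩)⟩
          · exact absurd ha (adj_rl _ u)
          · exact Or.inl ⟨u, (by simpa [hS] using huS : u ∈ C), rfl⟩
        · rintro (⟨u', huC, hu⟩ | ⟨w, _, hw⟩)
          · obtain rfl : u' = u := Sum.inl.inj hu
            exact ⟨by simp, Or.inr ⟨adj_rl _ _, hSc i, huC⟩⟩
          · exact absurd hw (by simp)
      · simp only [SimpleGraph.mem_neighborSet, pc_adj, adj_rr, gadj_ll, Set.mem_union,
          Set.mem_image, ne_eq]
        constructor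
        · rintro ⟨hne, (⟨_, hns⟩ | ⟨hna, _, _⟩)⟩
          · exact absurd ⟨hSc i, hSc i'⟩ hns
          · exact absurd (fun e => hne (by rw [e])) hna
        · rintro (⟨u, _, hu⟩ | ⟨w, hw, hww⟩)
          · exact absurd hu (by simp)
          · obtain rfl : w = Sum.inl i' := Sum.inr.inj hww
            rcases hw with ⟨q, hq, hqq⟩
            exact absurd hqq (by simp)
      · simp only [SimpleGraph.mem_neighborSet, pc_adj, adj_rr, gadj_lr, Set.mem_union,
          Set.mem_image, Set.mem_setOf_eq, ne_eq]
        constructor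
        · rintro ⟨hne, (⟨ha, _⟩ | ⟨_, _, hpS⟩)⟩
          · exact Or.inr ⟨Sum.inr p, ⟨p, ⟨ha.1.symm, ha.2⟩, rfl⟩, rfl⟩
          · exact absurd hpS (hSab p)
        · rintro (⟨u, _, hu⟩ | ⟨w, hw, hww⟩)
          · exact absurd hu (by simp)
          · obtain rfl : w = Sum.inr p := Sum.inr.inj hww
            rcases hw with ⟨q, ⟨hq1, hq2⟩, hqq⟩
            obtain rfl : q = p := Sum.inr.inj hqq
            refine ⟨by simp, Or.inl ⟨⟨hq1.symm, hq2⟩, ?_⟩⟩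
            rintro ⟨_, hpS⟩
            exact hSab _ hpS
    rw [hset, Set.ncard_union_eq (disjoint_inl_inr _ _) (Set.toFinite _) (Set.toFinite _),
      Set.ncard_image_of_injective _ Sum.inl_injective,
      Set.ncard_image_of_injective _ Sum.inr_injective,
      Set.ncard_image_of_injective _ Sum.inr_injective, hCcard]
    have h1 : {p : Fin (k - 1) × Fin r × Bool | p.1 = i ∧ ((p.2.1 : ℕ) < m)} =
        (fun q : Fin r × Bool => (i, q)) '' {q : Fin r × Bool | q.1 ∈ {j : Fin r | (j : ℕ) < m}} := by
      ext ⟨i', l, t⟩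
      simp only [Set.mem_setOf_eq, Set.mem_image, Prod.mk.injEq, Prod.exists]
      constructor
      · rintro ⟨rfl, hl⟩; exact ⟨l, t, hl, rfl, rfl, rfl⟩
      · rintro ⟨a, b, hab, rfl, rfl, rfl⟩; exact ⟨rfl, hab⟩
    have hinj : Function.Injective (fun q : Fin r × Bool => (i, q)) := fun a b h => by
      simpa using h
    rw [h1, Set.ncard_image_of_injective _ hinj, ncard_prod_bool, ncard_fin_lt hmr]
    omega
  · -- x = Sum.inr (Sum.inr (i, j, s))
    have hset : ((G ⊕g gadgetGraph k r).partialComplement S).neighborSet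
        (Sum.inr (Sum.inr (i, j, s))) =
        Sum.inr '' (Sum.inl '' {i' : Fin (k - 1) | i' = i ∧ (j : ℕ) < m} ∪
          Sum.inr '' {p : Fin (k - 1) × Fin r × Bool |
            p.1 = i ∧ p.2.2 = !s ∧ ¬(p.2.1 = j ∧ (j : ℕ) < m)}) := by
      ext y
      obtain (u | (i' | ⟨i', l, t⟩)) := y
      · simp only [SimpleGraph.mem_neighborSet, pc_adj, Set.mem_image]
        constructor
        · rintro ⟨hne, (⟨ha, _⟩ | ⟨_, hxS, _⟩)⟩
          · exact absurd ha (adj_rl _ u)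
          · exact absurd hxS (hSab _)
        · rintro ⟨w, _, hw⟩
          exact absurd hw (by simp)
      · simp only [SimpleGraph.mem_neighborSet, pc_adj, adj_rr, Set.mem_image, Set.mem_union,
          Set.mem_setOf_eq]
        have hadj : (gadgetGraph k r).Adj (Sum.inr (i, j, s)) (Sum.inl i') ↔
            i' = (i, j, s).1 ∧ ((i, j, s).2.1 : ℕ) < m := by
          rw [SimpleGraph.adj_comm]; exact gadj_lr i' (i, j, s)
        constructor
        · rintro ⟨hne, (⟨ha, _⟩ | ⟨_, hxS, _⟩)⟩
          · rw [hadj] at ha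
            exact ⟨Sum.inl i', Or.inl ⟨i', ⟨ha.1, ha.2⟩, rfl⟩, rfl⟩
          · exact absurd hxS (hSab _)
        · rintro ⟨w, hw, hww⟩
          obtain rfl : w = Sum.inl i' := Sum.inr.inj hww
          rcases hw with (⟨a, ⟨ha1, ha2⟩, haa⟩ | ⟨q, _, hqq⟩)
          · obtain rfl : a = i' := Sum.inl.inj haa
            refine ⟨by simp, Or.inl ⟨hadj.2 ⟨ha1, ha2⟩, ?_⟩⟩
            rintro ⟨hxS, _⟩
            exact hSab _ hxS
          · exact absurd hqq (by simp)
      · simp only [SimpleGraph.mem_neighborSet, pc_adj, adj_rr, gadj_rr, Set.mem_image,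
          Set.mem_union, Set.mem_setOf_eq, ne_eq]
        have hbool : ∀ t' : Bool, (¬ s = t') ↔ t' = !s := by
          intro t'; cases s <;> cases t' <;> simp
        constructor
        · rintro ⟨hne, (⟨⟨h1, h2, h3⟩, _⟩ | ⟨_, hxS, _⟩)⟩
          · refine ⟨Sum.inr (i', l, t), Or.inr ⟨(i', l, t), ⟨h1.symm, (hbool t).1 h2, ?_⟩, rfl⟩, rfl⟩
            rintro ⟨rfl, hlt⟩
            exact h3 ⟨rfl, hlt⟩
          · exact absurd hxS (hSab _)
        · rintro ⟨w, hw, hww⟩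
          obtain rfl : w = Sum.inr (i', l, t) := Sum.inr.inj hww
          rcases hw with (⟨a, _, haa⟩ | ⟨q, ⟨hq1, hq2, hq3⟩, hqq⟩)
          · exact absurd haa (by simp)
          · obtain rfl : q = (i', l, t) := Sum.inr.inj hqq
            have hst : ¬ s = t := (hbool t).2 hq2
            refine ⟨?_, Or.inl ⟨⟨hq1.symm, hst, ?_⟩, ?_⟩⟩
            · intro hc
              simp only [Sum.inr.injEq, Prod.mk.injEq] at hc
              exact hst hc.2.2
            · rintro ⟨rfl, hjm⟩
              exact hq3 ⟨rfl, hjm⟩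
            · rintro ⟨hxS, _⟩
              exact hSab _ hxS
    rw [hset, Set.ncard_image_of_injective _ Sum.inr_injective,
      Set.ncard_union_eq (disjoint_inl_inr _ _) (Set.toFinite _) (Set.toFinite _),
      Set.ncard_image_of_injective _ Sum.inl_injective,
      Set.ncard_image_of_injective _ Sum.inr_injective]
    have hinj2 : Function.Injective (fun l : Fin r => ((i, l, !s) : Fin (k-1) × Fin r × Bool)) :=
      fun a b h => by simpa using h
    by_cases hj : (j : ℕ) < m
    · have hA : {i' : Fin (k - 1) | i' = i ∧ (j : ℕ) < m} = {i} := by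
        ext i'; simp [hj]
      have hB : {p : Fin (k - 1) × Fin r × Bool |
          p.1 = i ∧ p.2.2 = !s ∧ ¬(p.2.1 = j ∧ (j : ℕ) < m)} =
          (fun l : Fin r => ((i, l, !s) : Fin (k-1) × Fin r × Bool)) '' {l : Fin r | l ≠ j} := by
        ext ⟨i', l, t⟩
        simp only [Set.mem_setOf_eq, Set.mem_image, Prod.mk.injEq, hj, and_true, ne_eq]
        constructor
        · rintro ⟨rfl, rfl, hl⟩; exact ⟨l, hl, rfl, rfl, rfl⟩
        · rintro ⟨a, ha, rfl, rfl, rfl⟩; exact ⟨rfl, rfl, ha⟩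
      have hAB : ({l : Fin r | l ≠ j}).ncard = r - 1 := by
        have : {l : Fin r | l ≠ j} = Set.univ \ {j} := by ext l; simp
        rw [this, Set.ncard_diff_singleton_of_mem (Set.mem_univ j),
          Set.ncard_univ, Nat.card_eq_fintype_card, Fintype.card_fin]
      rw [hA, hB, Set.ncard_image_of_injective _ hinj2, hAB, Set.ncard_singleton]
      omega
    · have hA : {i' : Fin (k - 1) | i' = i ∧ (j : ℕ) < m} = ∅ := by
        ext i'; simp [hj]
      have hB : {p : Fin (k - 1) × Fin r × Bool |
          p.1 = i ∧ p.2.2 = !s ∧ ¬(p.2.1 = j ∧ (j : ℕ) < m)} =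
          (fun l : Fin r => ((i, l, !s) : Fin (k-1) × Fin r × Bool)) '' Set.univ := by
        ext ⟨i', l, t⟩
        simp only [Set.mem_setOf_eq, Set.mem_image, Prod.mk.injEq, hj, and_false,
          not_false_iff, and_true, Set.mem_univ, true_and]
        constructor
        · rintro ⟨rfl, rfl⟩; exact ⟨l, rfl, rfl, rfl⟩
        · rintro ⟨a, rfl, rfl, rfl⟩; exact ⟨rfl, rfl⟩
      rw [hA, hB, Set.ncard_empty, Set.ncard_image_of_injective _ hinj2,
        Set.ncard_univ, Nat.card_eq_fintype_card, Fintype.card_fin]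
      omega
end
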